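/- Let Δ ∈ M_m(ℂ) be a traceless Hermitian matrix with Jordan decomposition Δ = Δ₊ − Δ₋, let P₊ be the projector onto the strictly positive eigenspace of Δ, let P₀ be the projector onto its kernel, and let E₀ be Hermitian with 0 ≤ E₀ ≤ P₀. Define λ_cg : M_m(ℂ) → M_d(ℂ) (d ≥ 2) by λ_cg(X) = Tr((P₊ + E₀) X) |0⟩⟨0| + Tr((I − P₊ − E₀) X) |1⟩⟨1|, where |0⟩, |1⟩ are two fixed orthonormal vectors of ℂ^d. Then λ_cg is completely positive and trace-preserving, λ_cg(Δ) = ‖Δ₊‖₁ |0⟩⟨0| − ‖Δ₋‖₁ |1⟩⟨1|, and consequently ‖λ_cg(Δ)‖₁ = ‖Δ‖₁. -/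

import Mathlib

open scoped ComplexOrder

/-- The trace norm (Schatten 1-norm) of a complex matrix: `‖A‖₁ = Tr √(Aᴴ A)`. -/
noncomputable def traceNorm {m : Type*} [Fintype m] [DecidableEq m]
    (A : Matrix m m ℂ) : ℝ :=
  (((Matrix.posSemidef_conjTranspose_mul_self A).1.eigenvectorUnitary.1 *
      Matrix.diagonal (((↑) : ℝ → ℂ) ∘ (Real.sqrt ·) ∘ (Matrix.posSemidef_conjTranspose_mul_self A).1.eigenvalues) *
      (star (Matrix.posSemidef_conjTranspose_mul_self A).1.eigenvectorUnitary : Matrix m m ℂ)).trace).re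

/-- The tensor product `Φ ⊗ id_{M_k(ℂ)}` of a map between matrix algebras with the
identity on `M_k(ℂ)`, acting blockwise. -/
def mapTensorId {m d : Type*} [Fintype m] [Fintype d] (k : ℕ)
    (Φ : Matrix m m ℂ → Matrix d d ℂ)
    (M : Matrix (m × Fin k) (m × Fin k) ℂ) : Matrix (d × Fin k) (d × Fin k) ℂ :=
  Matrix.of fun p q => Φ (Matrix.of fun i j => M (i, p.2) (j, q.2)) p.1 q.1

/-- A map between matrix algebras is completely positive if `Φ ⊗ id_{M_k(ℂ)}` is
positive for every `k`. -/
def IsCompletelyPositive {m d : Type*} [Fintype m] [Fintype d]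
    (Φ : Matrix m m ℂ → Matrix d d ℂ) : Prop :=
  ∀ (k : ℕ) (M : Matrix (m × Fin k) (m × Fin k) ℂ),
    M.PosSemidef → (mapTensorId k Φ M).PosSemidef

/-- A map between matrix algebras is trace-preserving if `Tr (Φ X) = Tr X` for all `X`. -/
def IsTracePreservingMap {m d : Type*} [Fintype m] [Fintype d]
    (Φ : Matrix m m ℂ → Matrix d d ℂ) : Prop :=
  ∀ X : Matrix m m ℂ, (Φ X).trace = X.trace

/-- `P` is the orthogonal projector onto the support (range) of the Hermitian matrix `Q`. -/
def IsSupportProjection {d : Type*} [Fintype d]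
    (P Q : Matrix d d ℂ) : Prop :=
  P.IsHermitian ∧ P * P = P ∧ P * Q = Q ∧
    ∀ v : d → ℂ, Q.mulVec v = 0 → P.mulVec v = 0

/-- The coarse-graining (measurement) map
`λ_cg(X) = Tr(F X) |0⟩⟨0| + Tr((I − F) X) |1⟩⟨1|`, where `F = P₊ + E₀` and
`|0⟩, |1⟩` are two fixed orthonormal vectors of `ℂ^d`. -/
noncomputable def lamCG {m d : ℕ} (F : Matrix (Fin m) (Fin m) ℂ) (e0 e1 : Fin d → ℂ)
    (X : Matrix (Fin m) (Fin m) ℂ) : Matrix (Fin d) (Fin d) ℂ :=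
  ((F * X).trace) • Matrix.vecMulVec e0 (star e0) +
    (((1 - F) * X).trace) • Matrix.vecMulVec e1 (star e1)

section Aux

open Matrix

lemma aux_trace_nonneg {n : Type*} [Fintype n] [DecidableEq n] {A : Matrix n n ℂ}
    (hA : A.PosSemidef) : 0 ≤ A.trace := by
  rw [Matrix.trace]
  apply Finset.sum_nonneg
  intro i _
  have := hA.dotProduct_mulVec_nonneg (Pi.single i 1)
  simpa [dotProduct, Matrix.mulVec, Pi.single_apply] using this

open scoped MatrixOrder in
lemma aux_trace_mul_nonneg {n : Type*} [Fintype n] [DecidableEq n] {A B : Matrix n n ℂ}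
    (hA : A.PosSemidef) (hB : B.PosSemidef) : 0 ≤ (A * B).trace := by
  have h1 : A * B = A * (CFC.sqrt B * CFC.sqrt B) := by rw [CFC.sqrt_mul_sqrt_self B hB.nonneg]
  have h2 : (A * (CFC.sqrt B * CFC.sqrt B)).trace = (CFC.sqrt B * A * CFC.sqrt B).trace := by
    rw [← Matrix.mul_assoc, Matrix.trace_mul_comm, Matrix.mul_assoc]
  rw [h1, h2]
  have := (hA.conjTranspose_mul_mul_same (CFC.sqrt B))
  rw [(Matrix.LE.le.posSemidef (CFC.sqrt_nonneg B)).1.eq] at this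
  exact aux_trace_nonneg this

open scoped MatrixOrder in
lemma aux_traceNorm_eq {n : Type*} [Fintype n] [DecidableEq n] (A : Matrix n n ℂ)
    {B : Matrix n n ℂ} (hB : B.PosSemidef) (h : B * B = Aᴴ * A) :
    traceNorm A = B.trace.re := by
  unfold traceNorm
  change (((Matrix.posSemidef_conjTranspose_mul_self A).1.cfc Real.sqrt).trace).re = _
  rw [← (Matrix.posSemidef_conjTranspose_mul_self A).1.cfc_eq, ← cfcₙ_eq_cfc,
    ← CFC.sqrt_eq_real_sqrt _ (Matrix.posSemidef_conjTranspose_mul_self A).nonneg,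
    CFC.sqrt_unique h hB.nonneg]

lemma aux_star_trace_mul {n : Type*} [Fintype n] [DecidableEq n] {A : Matrix n n ℂ}
    (hA : A.IsHermitian) (B : Matrix n n ℂ) :
    star ((A * B).trace) = (A * Bᴴ).trace := by
  rw [← Matrix.trace_conjTranspose, Matrix.conjTranspose_mul, hA.eq, Matrix.trace_mul_comm]

lemma aux_sum4_perm {α β γ δ : Type*} [Fintype α] [Fintype β] [Fintype γ] [Fintype δ]
    (t : α → β → γ → δ → ℂ) :
    ∑ y : α, ∑ x : β, ∑ a : γ, ∑ b : δ, t y x a b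
      = ∑ a : γ, ∑ b : δ, ∑ x : β, ∑ y : α, t y x a b := by
  calc ∑ y : α, ∑ x : β, ∑ a : γ, ∑ b : δ, t y x a b
      = ∑ p : (α × β) × (γ × δ), t p.1.1 p.1.2 p.2.1 p.2.2 := by
        simp_rw [Fintype.sum_prod_type]
    _ = ∑ p : (γ × δ) × (β × α), t p.2.2 p.2.1 p.1.1 p.1.2 := by
        apply Fintype.sum_equiv
          ⟨fun p => ((p.2.1, p.2.2), (p.1.2, p.1.1)),
           fun p => ((p.2.2, p.2.1), (p.1.1, p.1.2)), fun p => rfl, fun p => rfl⟩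
        intro p; rfl
    _ = ∑ a : γ, ∑ b : δ, ∑ x : β, ∑ y : α, t y x a b := by
        simp_rw [Fintype.sum_prod_type]

lemma aux_trace_identity {m k : ℕ} (F : Matrix (Fin m) (Fin m) ℂ)
    (M : Matrix (Fin m × Fin k) (Fin m × Fin k) ℂ) (c : Fin k → ℂ) :
    dotProduct (star c)
      ((Matrix.of fun (j j' : Fin k) =>
        (F * Matrix.of fun i i' => M (i, j) (i', j')).trace).mulVec c)
      = (F * Matrix.of fun (i i' : Fin m) =>
          ∑ j, ∑ j', star (c j) * M (i, j) (i', j') * c j').trace := by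
  simp only [Matrix.trace, Matrix.diag, Matrix.mul_apply, dotProduct, Matrix.mulVec,
    Matrix.of_apply, Finset.mul_sum, Finset.sum_mul, Pi.star_apply]
  rw [aux_sum4_perm]
  apply Finset.sum_congr rfl; intro a _
  apply Finset.sum_congr rfl; intro b _
  rw [Finset.sum_comm]
  apply Finset.sum_congr rfl; intro x _
  apply Finset.sum_congr rfl; intro y _
  ring

lemma aux_N_eq {m k : ℕ} (M : Matrix (Fin m × Fin k) (Fin m × Fin k) ℂ) (c : Fin k → ℂ) :
    (Matrix.of fun (i i' : Fin m) => ∑ j, ∑ j', star (c j) * M (i, j) (i', j') * c j')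
      = (Matrix.of fun (i : Fin m) (p : Fin m × Fin k) =>
          if i = p.1 then star (c p.2) else 0) * M *
        (Matrix.of fun (i : Fin m) (p : Fin m × Fin k) =>
          if i = p.1 then star (c p.2) else 0)ᴴ := by
  have collapse : ∀ {α : Type} [Fintype α] (f : Fin m → α → ℂ) (i : Fin m),
      (∑ x : Fin m, ∑ y : α, if i = x then f x y else 0) = ∑ y : α, f i y := by
    intro α _ f i
    rw [Finset.sum_comm]
    simp
  ext i i'
  simp only [Matrix.mul_apply, Matrix.conjTranspose_apply, Matrix.of_apply,
    Fintype.sum_prod_type, ite_mul, mul_ite, zero_mul, mul_zero,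
    apply_ite (star : ℂ → ℂ), star_zero, star_star]
  rw [collapse]
  simp_rw [collapse]
  rw [Finset.sum_comm]
  apply Finset.sum_congr rfl; intro j _
  rw [Finset.sum_mul]
lemma aux_G_posSemidef {m k : ℕ} {F : Matrix (Fin m) (Fin m) ℂ}
    {M : Matrix (Fin m × Fin k) (Fin m × Fin k) ℂ}
    (hF : F.PosSemidef) (hM : M.PosSemidef) :
    (Matrix.of fun (j j' : Fin k) =>
      (F * Matrix.of fun i i' => M (i, j) (i', j')).trace).PosSemidef := by
  rw [Matrix.posSemidef_iff_dotProduct_mulVec]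
  constructor
  · ext j j'
    simp only [Matrix.conjTranspose_apply, Matrix.of_apply]
    rw [aux_star_trace_mul hF.1]
    congr 1
    have hb : (Matrix.of fun (i i' : Fin m) => M (i, j') (i', j))ᴴ
        = (Matrix.of fun (i i' : Fin m) => M (i, j) (i', j')) := by
      ext i i'
      simp only [Matrix.conjTranspose_apply, Matrix.of_apply]
      rw [← Matrix.conjTranspose_apply, hM.1.eq]
    rw [hb]
  · intro c
    rw [aux_trace_identity, aux_N_eq]
    exact aux_trace_mul_nonneg hF (hM.mul_mul_conjTranspose_same _)

/-- the rank-one dilation `p q ↦ G p.2 q.2 * (e p.1 * star (e q.1))` equals `Wᴴ G W`. -/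
lemma aux_Y_eq {d k : ℕ} (G : Matrix (Fin k) (Fin k) ℂ) (e : Fin d → ℂ) :
    (Matrix.of fun (p q : Fin d × Fin k) => G p.2 q.2 * (e p.1 * star (e q.1)))
      = (Matrix.of fun (j : Fin k) (q : Fin d × Fin k) =>
          if j = q.2 then star (e q.1) else 0)ᴴ * G *
        (Matrix.of fun (j : Fin k) (q : Fin d × Fin k) =>
          if j = q.2 then star (e q.1) else 0) := by
  ext p q
  simp [Matrix.mul_apply, Matrix.conjTranspose_apply, apply_ite, Finset.mul_sum, Finset.sum_mul,
    Finset.sum_ite_eq, Finset.sum_ite_eq', mul_comm, mul_left_comm]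
  ring

lemma aux_vecMulVec_posSemidef {d : ℕ} (e : Fin d → ℂ) :
    (Matrix.vecMulVec e (star e)).PosSemidef := by
  rw [Matrix.posSemidef_iff_dotProduct_mulVec]
  constructor
  · ext i j
    simp [Matrix.conjTranspose_apply, Matrix.vecMulVec_apply, mul_comm]
  · intro x
    have h : dotProduct (star x) ((Matrix.vecMulVec e (star e)).mulVec x)
        = (∑ i, star (x i) * e i) * star (∑ i, star (x i) * e i) := by
      rw [star_sum]
      have h2 : ∀ i, star (star (x i) * e i) = x i * star (e i) := by
        intro i; rw [star_mul', star_star]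
      simp_rw [h2]
      rw [Finset.sum_mul_sum]
      simp only [dotProduct, Matrix.mulVec, Matrix.vecMulVec_apply, Pi.star_apply,
        Finset.mul_sum]
      apply Finset.sum_congr rfl; intro i _
      apply Finset.sum_congr rfl; intro j _
      ring
    rw [h]
    exact mul_star_self_nonneg _

lemma aux_smul_posSemidef {n : Type*} [Fintype n] [DecidableEq n] {a : ℝ} (ha : 0 ≤ a)
    {Q : Matrix n n ℂ} (hQ : Q.PosSemidef) : ((a : ℂ) • Q).PosSemidef := by
  rw [Matrix.posSemidef_iff_dotProduct_mulVec]
  constructor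
  · ext i j
    simp [Matrix.conjTranspose_apply, hQ.1.apply, Complex.conj_ofReal]
  · intro x
    have := hQ.dotProduct_mulVec_nonneg x
    have ha' : (0:ℂ) ≤ (a:ℂ) := by
      rw [Complex.le_def]; simp [ha]
    calc (0:ℂ) = (a:ℂ) * 0 := by ring
      _ ≤ (a:ℂ) * (dotProduct (star x) (Q.mulVec x)) := by
          exact mul_le_mul_of_nonneg_left this ha'
      _ = dotProduct (star x) (((a:ℂ) • Q).mulVec x) := by
          simp [Matrix.smul_mulVec, dotProduct_smul, smul_eq_mul]

lemma aux_vecMulVec_mul {d : ℕ} (u v w z : Fin d → ℂ) :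
    Matrix.vecMulVec u v * Matrix.vecMulVec w z
      = (∑ i, v i * w i) • Matrix.vecMulVec u z := by
  ext i j
  simp only [Matrix.mul_apply, Matrix.vecMulVec_apply, Matrix.smul_apply, smul_eq_mul,
    Finset.sum_mul, Finset.mul_sum]
  apply Finset.sum_congr rfl; intro k _
  ring

lemma aux_trace_vecMulVec {d : ℕ} (u v : Fin d → ℂ) :
    (Matrix.vecMulVec u v).trace = ∑ i, v i * u i := by
  simp [Matrix.trace, Matrix.diag, Matrix.vecMulVec_apply, mul_comm]

lemma aux_supp_mul_zero {n : Type*} [Fintype n] [DecidableEq n]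
    {P Q B : Matrix n n ℂ} (hP : IsSupportProjection P Q) (h : Q * B = 0) : P * B = 0 := by
  have hv : ∀ v, (P * B).mulVec v = 0 := by
    intro v
    rw [← Matrix.mulVec_mulVec]
    apply hP.2.2.2
    rw [Matrix.mulVec_mulVec, h, Matrix.zero_mulVec]
  ext i j
  have := congrFun (hv (Pi.single j 1)) i
  simpa [Matrix.mulVec, dotProduct, Pi.single_apply] using this

end Aux

/-- with `Δ` traceless Hermitian with Jordan decomposition `Δ = Δ₊ − Δ₋`,
`P₊` the projector onto the strictly positive eigenspace of `Δ`, `P₀` the projector onto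
its kernel, `E₀` Hermitian with `0 ≤ E₀ ≤ P₀`, and `|0⟩, |1⟩` orthonormal vectors of
`ℂ^d` (`d ≥ 2`), the map `λ_cg(X) = Tr((P₊+E₀)X)|0⟩⟨0| + Tr((I−P₊−E₀)X)|1⟩⟨1|` is
completely positive and trace-preserving, satisfies
`λ_cg(Δ) = ‖Δ₊‖₁ |0⟩⟨0| − ‖Δ₋‖₁ |1⟩⟨1|`, and consequently `‖λ_cg(Δ)‖₁ = ‖Δ‖₁`. -/
theorem lamCG_is_CPTP_and_preserves_traceNorm
    {m d : ℕ} (hd : 2 ≤ d)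
    (Δ Δp Δm : Matrix (Fin m) (Fin m) ℂ)
    (hΔ : Δ.IsHermitian) (hΔtr : Δ.trace = 0)
    (hΔp : Δp.PosSemidef) (hΔm : Δm.PosSemidef)
    (hJordan : Δ = Δp - Δm) (horth : Δp * Δm = 0)
    (Pp Pm : Matrix (Fin m) (Fin m) ℂ)
    (hPp : IsSupportProjection Pp Δp) (hPm : IsSupportProjection Pm Δm)
    (P0 : Matrix (Fin m) (Fin m) ℂ) (hP0 : P0 = 1 - Pp - Pm)
    (E₀ : Matrix (Fin m) (Fin m) ℂ) (hE₀herm : E₀.IsHermitian)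
    (hE₀pos : E₀.PosSemidef) (hE₀le : (P0 - E₀).PosSemidef)
    (e0 e1 : Fin d → ℂ)
    (he0 : ∑ x : Fin d, (starRingEnd ℂ) (e0 x) * e0 x = 1)
    (he1 : ∑ x : Fin d, (starRingEnd ℂ) (e1 x) * e1 x = 1)
    (he01 : ∑ x : Fin d, (starRingEnd ℂ) (e0 x) * e1 x = 0) :
    IsLinearMap ℂ (lamCG (Pp + E₀) e0 e1) ∧
    IsCompletelyPositive (lamCG (Pp + E₀) e0 e1) ∧
    IsTracePreservingMap (lamCG (Pp + E₀) e0 e1) ∧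
    lamCG (Pp + E₀) e0 e1 Δ
      = (traceNorm Δp : ℂ) • Matrix.vecMulVec e0 (star e0)
        - (traceNorm Δm : ℂ) • Matrix.vecMulVec e1 (star e1) ∧
    traceNorm (lamCG (Pp + E₀) e0 e1 Δ) = traceNorm Δ := by
  obtain ⟨hPpH, hPpI, hPpS, hPpK⟩ := hPp
  obtain ⟨hPmH, hPmI, hPmS, hPmK⟩ := hPm
  set F := Pp + E₀ with hF
  -- basic algebraic facts
  have hPpPsd : Pp.PosSemidef := by
    have := Matrix.posSemidef_conjTranspose_mul_self Pp
    rwa [hPpH.eq, hPpI] at this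
  have hPmPsd : Pm.PosSemidef := by
    have := Matrix.posSemidef_conjTranspose_mul_self Pm
    rwa [hPmH.eq, hPmI] at this
  have hPpΔm : Pp * Δm = 0 := aux_supp_mul_zero ⟨hPpH, hPpI, hPpS, hPpK⟩ horth
  have hΔmPp : Δm * Pp = 0 := by
    have := congrArg Matrix.conjTranspose hPpΔm
    rwa [Matrix.conjTranspose_mul, hPpH.eq, hΔm.1.eq, Matrix.conjTranspose_zero] at this
  have hPmPp : Pm * Pp = 0 := aux_supp_mul_zero ⟨hPmH, hPmI, hPmS, hPmK⟩ hΔmPp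
  have hPpPm : Pp * Pm = 0 := by
    have := congrArg Matrix.conjTranspose hPmPp
    rwa [Matrix.conjTranspose_mul, hPpH.eq, hPmH.eq, Matrix.conjTranspose_zero] at this
  have hΔpPp : Δp * Pp = Δp := by
    have := congrArg Matrix.conjTranspose hPpS
    rwa [Matrix.conjTranspose_mul, hPpH.eq, hΔp.1.eq] at this
  have hΔmPm : Δm * Pm = Δm := by
    have := congrArg Matrix.conjTranspose hPmS
    rwa [Matrix.conjTranspose_mul, hPmH.eq, hΔm.1.eq] at this
  have hPpP0 : Pp * P0 = 0 := by
    rw [hP0, Matrix.mul_sub, Matrix.mul_sub, Matrix.mul_one, hPpI, hPpPm]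
    simp
  have hPmP0 : Pm * P0 = 0 := by
    rw [hP0, Matrix.mul_sub, Matrix.mul_sub, Matrix.mul_one, hPmI, hPmPp]
    simp
  -- F and 1 - F are PSD
  have hFpsd : F.PosSemidef := hPpPsd.add hE₀pos
  have h1F : 1 - F = (P0 - E₀) + Pm := by
    rw [hF, hP0]; abel
  have h1Fpsd : (1 - F).PosSemidef := by rw [h1F]; exact hE₀le.add hPmPsd
  -- traces of E₀ against Δp and Δm vanish
  have keytr : ∀ (P D : Matrix (Fin m) (Fin m) ℂ), P.IsHermitian → D.PosSemidef →
      P * D = D → D * P = D → P * P0 = 0 → (E₀ * D).trace = 0 := by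
    intro P D hPH hD hPD hDP hPP0
    have hPDP : P * D * P = D := by rw [hPD, hDP]
    have hPE : P * E₀ * P = -(P * (P0 - E₀) * P) := by
      rw [Matrix.mul_sub, Matrix.sub_mul, hPP0, Matrix.zero_mul]
      simp
    have hconj : ((P * (P0 - E₀) * P)).PosSemidef := by
      have := hE₀le.conjTranspose_mul_mul_same P
      rwa [hPH.eq] at this
    have htr : (E₀ * D).trace = ((P * E₀ * P) * D).trace := by
      conv_lhs => rw [← hPDP]
      rw [show E₀ * (P * D * P) = (E₀ * P * D) * P by simp [Matrix.mul_assoc],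
        Matrix.trace_mul_comm]
      congr 1
      simp [Matrix.mul_assoc]
    have hle : (E₀ * D).trace ≤ 0 := by
      rw [htr, hPE]
      have := aux_trace_mul_nonneg hconj hD
      rw [Matrix.neg_mul, Matrix.trace_neg]
      exact neg_nonpos.mpr this
    exact le_antisymm hle (aux_trace_mul_nonneg hE₀pos hD)
  have trE₀Δp : (E₀ * Δp).trace = 0 := keytr Pp Δp hPpH hΔp hPpS hΔpPp hPpP0
  have trE₀Δm : (E₀ * Δm).trace = 0 := keytr Pm Δm hPmH hΔm hPmS hΔmPm hPmP0
  have TrFΔ : (F * Δ).trace = Δp.trace := by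
    rw [hF, hJordan]
    rw [Matrix.add_mul, Matrix.mul_sub, Matrix.mul_sub, Matrix.trace_add, Matrix.trace_sub,
      Matrix.trace_sub, hPpS, hPpΔm, trE₀Δp, trE₀Δm]
    simp
  have hTrEq : Δp.trace = Δm.trace := by
    have := hΔtr
    rw [hJordan, Matrix.trace_sub, sub_eq_zero] at this
    exact this
  have Tr1FΔ : ((1 - F) * Δ).trace = -(Δm.trace) := by
    rw [Matrix.sub_mul, Matrix.one_mul, Matrix.trace_sub, TrFΔ, hΔtr, hTrEq]
    ring
  -- real trace values
  have hTrΔpRe : ((Δp.trace.re : ℝ) : ℂ) = Δp.trace := by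
    have h := aux_trace_nonneg hΔp
    rw [Complex.le_def] at h
    apply Complex.ext <;> simp [← h.2]
  have hTrΔmRe : ((Δm.trace.re : ℝ) : ℂ) = Δm.trace := by
    have h := aux_trace_nonneg hΔm
    rw [Complex.le_def] at h
    apply Complex.ext <;> simp [← h.2]
  have tnΔp : traceNorm Δp = Δp.trace.re := aux_traceNorm_eq Δp hΔp (by rw [hΔp.1.eq])
  have tnΔm : traceNorm Δm = Δm.trace.re := aux_traceNorm_eq Δm hΔm (by rw [hΔm.1.eq])
  -- the image of Δ
  have h4 : lamCG F e0 e1 Δ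
      = (traceNorm Δp : ℂ) • Matrix.vecMulVec e0 (star e0)
        - (traceNorm Δm : ℂ) • Matrix.vecMulVec e1 (star e1) := by
    unfold lamCG
    rw [TrFΔ, Tr1FΔ, tnΔp, tnΔm, hTrΔpRe, hTrΔmRe, sub_eq_add_neg, ← neg_smul]
  -- orthonormality products
  have hs0 : (∑ i, (star e0) i * e0 i) = 1 := by simpa using he0
  have hs1 : (∑ i, (star e1) i * e1 i) = 1 := by simpa using he1
  have hs01 : (∑ i, (star e0) i * e1 i) = 0 := by simpa using he01
  have hs10 : (∑ i, (star e1) i * e0 i) = 0 := by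
    have : (∑ i, (star e1) i * e0 i) = star (∑ i, (star e0) i * e1 i) := by
      rw [star_sum]
      apply Finset.sum_congr rfl; intro i _
      simp [star_mul', mul_comm]
    rw [this, hs01, star_zero]
  set Q0 := Matrix.vecMulVec e0 (star e0) with hQ0
  set Q1 := Matrix.vecMulVec e1 (star e1) with hQ1
  have q00 : Q0 * Q0 = Q0 := by rw [hQ0, aux_vecMulVec_mul, hs0, one_smul]
  have q11 : Q1 * Q1 = Q1 := by rw [hQ1, aux_vecMulVec_mul, hs1, one_smul]
  have q01 : Q0 * Q1 = 0 := by rw [hQ0, hQ1, aux_vecMulVec_mul, hs01, zero_smul]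
  have q10 : Q1 * Q0 = 0 := by rw [hQ0, hQ1, aux_vecMulVec_mul, hs10, zero_smul]
  have hQ0psd : Q0.PosSemidef := aux_vecMulVec_posSemidef e0
  have hQ1psd : Q1.PosSemidef := aux_vecMulVec_posSemidef e1
  refine ⟨?_, ?_, ?_, h4, ?_⟩
  · -- linearity
    constructor
    · intro X Y
      unfold lamCG
      rw [Matrix.mul_add, Matrix.mul_add, Matrix.trace_add, Matrix.trace_add,
        add_smul, add_smul]
      abel
    · intro c X
      unfold lamCG
      rw [Matrix.mul_smul, Matrix.mul_smul, Matrix.trace_smul, Matrix.trace_smul]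
      simp [smul_add, smul_smul]
  · -- complete positivity
    intro k M hM
    have hblock : mapTensorId k (lamCG F e0 e1) M
        = (Matrix.of fun (p q : Fin d × Fin k) =>
            (Matrix.of fun (j j' : Fin k) =>
              (F * Matrix.of fun i i' => M (i, j) (i', j')).trace) p.2 q.2
              * (e0 p.1 * star (e0 q.1)))
          + (Matrix.of fun (p q : Fin d × Fin k) =>
            (Matrix.of fun (j j' : Fin k) =>
              ((1 - F) * Matrix.of fun i i' => M (i, j) (i', j')).trace) p.2 q.2
              * (e1 p.1 * star (e1 q.1))) := by
      ext p q
      simp [mapTensorId, lamCG, Matrix.vecMulVec_apply, Matrix.add_apply,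
        Matrix.smul_apply, smul_eq_mul]
    rw [hblock, aux_Y_eq, aux_Y_eq]
    exact ((aux_G_posSemidef hFpsd hM).conjTranspose_mul_mul_same _).add
      ((aux_G_posSemidef h1Fpsd hM).conjTranspose_mul_mul_same _)
  · -- trace preserving
    intro X
    unfold lamCG
    rw [Matrix.trace_add, Matrix.trace_smul, Matrix.trace_smul,
      aux_trace_vecMulVec, aux_trace_vecMulVec, hs0, hs1, smul_eq_mul, smul_eq_mul,
      mul_one, mul_one, Matrix.sub_mul, Matrix.one_mul, Matrix.trace_sub]
    ring
  · -- trace norm preserved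
    have ha : 0 ≤ traceNorm Δp := by
      rw [tnΔp]
      have h := aux_trace_nonneg hΔp
      rw [Complex.le_def] at h
      simpa using h.1
    have hb : 0 ≤ traceNorm Δm := by
      rw [tnΔm]
      have h := aux_trace_nonneg hΔm
      rw [Complex.le_def] at h
      simpa using h.1
    set a : ℝ := traceNorm Δp
    set b : ℝ := traceNorm Δm
    have hBpsd : ((a : ℂ) • Q0 + (b : ℂ) • Q1).PosSemidef :=
      (aux_smul_posSemidef ha hQ0psd).add (aux_smul_posSemidef hb hQ1psd)
    have hAH : Matrix.conjTranspose ((a : ℂ) • Q0 - (b : ℂ) • Q1) = (a : ℂ) • Q0 - (b : ℂ) • Q1 := by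
      rw [Matrix.conjTranspose_sub, Matrix.conjTranspose_smul, Matrix.conjTranspose_smul,
        hQ0psd.1.eq, hQ1psd.1.eq]
      simp [Complex.conj_ofReal]
    have hBB : ((a : ℂ) • Q0 + (b : ℂ) • Q1) * ((a : ℂ) • Q0 + (b : ℂ) • Q1)
        = Matrix.conjTranspose ((a : ℂ) • Q0 - (b : ℂ) • Q1) * ((a : ℂ) • Q0 - (b : ℂ) • Q1) := by
      rw [hAH]
      rw [Matrix.add_mul, Matrix.mul_add, Matrix.mul_add, Matrix.sub_mul, Matrix.mul_sub,
        Matrix.mul_sub]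
      rw [Matrix.smul_mul, Matrix.smul_mul, Matrix.smul_mul, Matrix.smul_mul,
        Matrix.mul_smul, Matrix.mul_smul, Matrix.mul_smul, Matrix.mul_smul,
        q00, q01, q10, q11]
      simp
    have h5a : traceNorm ((a : ℂ) • Q0 - (b : ℂ) • Q1)
        = (((a : ℂ) • Q0 + (b : ℂ) • Q1).trace).re :=
      aux_traceNorm_eq _ hBpsd hBB
    have hΔmΔp : Δm * Δp = 0 := by
      have := congrArg Matrix.conjTranspose horth
      rwa [Matrix.conjTranspose_mul, hΔp.1.eq, hΔm.1.eq, Matrix.conjTranspose_zero] at this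
    have hBB2 : (Δp + Δm) * (Δp + Δm) = Matrix.conjTranspose Δ * Δ := by
      rw [hΔ.eq, hJordan]
      rw [Matrix.add_mul, Matrix.mul_add, Matrix.mul_add, Matrix.sub_mul, Matrix.mul_sub,
        Matrix.mul_sub, horth, hΔmΔp]
      simp
    have h5b : traceNorm Δ = ((Δp + Δm).trace).re :=
      aux_traceNorm_eq Δ (hΔp.add hΔm) hBB2
    rw [h4, h5a, h5b]
    rw [Matrix.trace_add, Matrix.trace_smul, Matrix.trace_smul,
      aux_trace_vecMulVec, aux_trace_vecMulVec, hs0, hs1, Matrix.trace_add]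
    simp [tnΔp, tnΔm]
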